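/- Let a ≥ 1 and b ≥ 0 be natural numbers, and let r, j be natural numbers with r < j ≤ a. Then the binomial coefficient C(2^{a+1}·b + 2^j, 2^{j+1} − 2^{r+1}) is odd if and only if j = r + 1. -/

import Mathlib

open Nat

lemma odd_choose_iff_testBit (n : ℕ) : ∀ k : ℕ,
    Odd (n.choose k) ↔ ∀ i, k.testBit i = true → n.testBit i = true := by
  induction n using Nat.strong_induction_on with
  | _ n ih =>
    intro k
    rcases Nat.eq_zero_or_pos n with hn | hn
    · subst hn
      rcases Nat.eq_zero_or_pos k with hk | hk
      · simp [hk]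
      · simp only [Nat.choose_eq_zero_of_lt hk]
        constructor
        · intro h; exact absurd h (by simp)
        · intro h
          obtain ⟨i, hi⟩ := Nat.exists_most_significant_bit hk.ne'
          have := h i hi.1
          simp [Nat.zero_testBit] at this
    · have hmod : n.choose k % 2 =
          ((n % 2).choose (k % 2) * ((n / 2).choose (k / 2))) % 2 :=
        @Choose.choose_modEq_choose_mod_mul_choose_div_nat n k 2 ⟨Nat.prime_two⟩
      have hodd : Odd (n.choose k) ↔
          Odd ((n % 2).choose (k % 2)) ∧ Odd ((n / 2).choose (k / 2)) := by
        rw [Nat.odd_iff, hmod, ← Nat.odd_iff, Nat.odd_mul]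
      have ih2 := ih (n / 2) (Nat.div_lt_self hn one_lt_two) (k / 2)
      rw [hodd, ih2]
      have hbit : Odd ((n % 2).choose (k % 2)) ↔
          (k.testBit 0 = true → n.testBit 0 = true) := by
        have h1 : n % 2 = 0 ∨ n % 2 = 1 := Nat.mod_two_eq_zero_or_one n
        have h2 : k % 2 = 0 ∨ k % 2 = 1 := Nat.mod_two_eq_zero_or_one k
        rcases h1 with h1 | h1 <;> rcases h2 with h2 | h2 <;>
          simp [h1, h2, Nat.testBit_zero]
      rw [hbit]
      constructor
      · rintro ⟨h0, hs⟩ i hi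
        cases i with
        | zero => exact h0 hi
        | succ i =>
          rw [Nat.testBit_succ] at hi ⊢
          exact hs i hi
      · intro h
        refine ⟨h 0, fun i hi => ?_⟩
        rw [← Nat.testBit_succ] at hi ⊢
        exact h (i + 1) hi

/-- For `1 ≤ a`, `r < j ≤ a`, the binomial coefficient
`C(2^{a+1}·b + 2^j, 2^{j+1} − 2^{r+1})` is odd if and only if `j = r + 1`. -/
theorem choose_odd_iff_succ (a b r j : ℕ) (ha : 1 ≤ a) (hrj : r < j) (hja : j ≤ a) :
    Odd (Nat.choose (2 ^ (a + 1) * b + 2 ^ j) (2 ^ (j + 1) - 2 ^ (r + 1))) ↔ j = r + 1 := by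
  set n := 2 ^ (a + 1) * b + 2 ^ j with hn
  -- bits of n below a+1 are those of 2^j
  have hnbit : ∀ i, i ≤ a → n.testBit i = decide (j = i) := by
    intro i hi
    have hmod : n % 2 ^ (a + 1) = 2 ^ j := by
      rw [hn, Nat.mul_add_mod]
      exact Nat.mod_eq_of_lt (Nat.pow_lt_pow_right one_lt_two (Nat.lt_succ_of_le hja))
    have := Nat.testBit_mod_two_pow n (a + 1) i
    rw [hmod, Nat.testBit_two_pow] at this
    simpa [Nat.lt_succ_of_le hi] using this.symm
  -- bits of k
  have hk : 2 ^ (j + 1) - 2 ^ (r + 1) = 2 ^ (r + 1) * (2 ^ (j - r) - 1) := by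
    have he : r + 1 + (j - r) = j + 1 := by omega
    rw [Nat.mul_sub, ← pow_add, he, mul_one]
  rw [odd_choose_iff_testBit]
  constructor
  · intro h
    have h1 : (2 ^ (j + 1) - 2 ^ (r + 1)).testBit (r + 1) = true := by
      rw [hk, Nat.testBit_two_pow_mul, Nat.testBit_two_pow_sub_one]
      simp only [Nat.sub_self]
      simp
      omega
    have h2 := h (r + 1) h1
    rw [hnbit (r + 1) (by omega)] at h2
    simpa using h2.symm
  · intro hj i hi
    rw [hk, Nat.testBit_two_pow_mul, Nat.testBit_two_pow_sub_one] at hi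
    simp only [Bool.and_eq_true, decide_eq_true_eq] at hi
    rw [hnbit i (by omega)]
    simp only [decide_eq_true_eq]
    omega
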